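/- Let K be a field, n ≥ 1, and let A be a symmetric n×n matrix over K with rows and columns indexed by {0, 1, …, n−1}. For nonzero t ∈ K define D(t) = det((t + t⁻¹)·I − A) and h_k(t) = (adj((t + t⁻¹)·I − A))_{0k} for 0 ≤ k ≤ n−1. Then for all nonzero x, y ∈ K: D(x)·h₀(y) − D(y)·h₀(x) = (x + x⁻¹ − y − y⁻¹)·Σ_{k=0}^{n−1} h_k(x)·h_k(y). -/

import Mathlib

open Matrix Finset

/-- The Christoffel–Darboux identity (18) of Proposition 2, in cofactor form for a
symmetric matrix `A` on `n + 1` indices (index `0` distinguished):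
with `D t = det((t + t⁻¹)·I - A)` and `h t k = adj((t + t⁻¹)·I - A)_{0k}`,
`D(x)·h₀(y) - D(y)·h₀(x) = (x + x⁻¹ - y - y⁻¹)·Σ_k h_k(x)·h_k(y)`. -/
theorem symmetric_christoffel_darboux {K : Type*} [Field K] (n : ℕ)
    (A : Matrix (Fin (n + 1)) (Fin (n + 1)) K) (hsymm : Aᵀ = A)
    (D : K → K)
    (hD : ∀ t, D t = ((t + t⁻¹) • (1 : Matrix (Fin (n + 1)) (Fin (n + 1)) K) - A).det)
    (h : K → Fin (n + 1) → K)
    (hh : ∀ t k, h t k =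
      ((t + t⁻¹) • (1 : Matrix (Fin (n + 1)) (Fin (n + 1)) K) - A).adjugate 0 k)
    (x y : K) (hx : x ≠ 0) (hy : y ≠ 0) :
    D x * h y 0 - D y * h x 0
      = (x + x⁻¹ - y - y⁻¹) * ∑ k : Fin (n + 1), h x k * h y k := by
  set u := x + x⁻¹ with hu
  set v := y + y⁻¹ with hv
  set Mx : Matrix (Fin (n + 1)) (Fin (n + 1)) K := u • 1 - A with hMx
  set My : Matrix (Fin (n + 1)) (Fin (n + 1)) K := v • 1 - A with hMy
  have hMyT : Myᵀ = My := by
    rw [hMy, transpose_sub, transpose_smul, transpose_one, hsymm]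
  have hadjT : (My.adjugate)ᵀ = My.adjugate := by
    rw [adjugate_transpose, hMyT]
  have hdiff : Mx - My = (u - v) • 1 := by
    rw [hMx, hMy, sub_smul]; abel
  have key : (u - v) • (Mx.adjugate * My.adjugate)
      = Mx.det • My.adjugate - My.det • Mx.adjugate := by
    have h1 : Mx.adjugate * Mx * My.adjugate = Mx.det • My.adjugate := by
      rw [adjugate_mul, smul_mul, one_mul]
    have h2 : Mx.adjugate * My * My.adjugate = My.det • Mx.adjugate := by
      rw [Matrix.mul_assoc, mul_adjugate, Matrix.mul_smul, Matrix.mul_one]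
    calc (u - v) • (Mx.adjugate * My.adjugate)
        = Mx.adjugate * ((Mx - My) * My.adjugate) := by
          rw [hdiff, Matrix.smul_mul, one_mul, Matrix.mul_smul]
      _ = Mx.adjugate * Mx * My.adjugate - Mx.adjugate * My * My.adjugate := by
          rw [sub_mul, mul_sub, Matrix.mul_assoc, Matrix.mul_assoc]
      _ = Mx.det • My.adjugate - My.det • Mx.adjugate := by rw [h1, h2]
  have key00 := congrFun (congrFun key 0) 0
  simp only [Matrix.smul_apply, Matrix.sub_apply, smul_eq_mul, mul_apply] at key00
  have hsum : ∀ k, My.adjugate k 0 = My.adjugate 0 k := by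
    intro k
    conv_lhs => rw [← hadjT]
    rfl
  rw [hD x, hD y, hh x 0, hh y 0]
  simp only [hh]
  calc Mx.det * My.adjugate 0 0 - My.det * Mx.adjugate 0 0
      = (u - v) * ∑ k, Mx.adjugate 0 k * My.adjugate k 0 := key00.symm
    _ = (u - v) * ∑ k, Mx.adjugate 0 k * My.adjugate 0 k := by
        congr 1; exact Finset.sum_congr rfl fun k _ => by rw [hsum k]
    _ = (x + x⁻¹ - y - y⁻¹) * ∑ k, Mx.adjugate 0 k * My.adjugate 0 k := by
        rw [hu, hv]; ring_nf
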